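/- For any m-exponent c and any B ∈ F(c), BL(Φ(B), c) ≤ BL(B, c). -/

import Mathlib

open MeasureTheory ENNReal Matrix Filter Topology

noncomputable section

/-- The space of `m`-transformations: tuples of linear maps `ℝ^n → ℝ^{n_j}`,
represented as matrices. -/
abbrev MTrans (m n : ℕ) (nd : Fin m → ℕ) := ∀ j : Fin m, Matrix (Fin (nd j)) (Fin n) ℝ

/-- A valid input for the Brascamp–Lieb inequality: each `f j` is measurable and
has positive finite integral. -/
def IsInput {m : ℕ} {nd : Fin m → ℕ} (f : ∀ j : Fin m, (Fin (nd j) → ℝ) → ℝ≥0∞) : Prop :=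
  ∀ j, Measurable (f j) ∧ 0 < ∫⁻ y, f j y ∧ ∫⁻ y, f j y < ⊤

/-- The Brascamp–Lieb ratio `BL(B,c;f)`. -/
def BLratio {m n : ℕ} {nd : Fin m → ℕ} (B : MTrans m n nd) (c : Fin m → ℝ)
    (f : ∀ j : Fin m, (Fin (nd j) → ℝ) → ℝ≥0∞) : ℝ≥0∞ :=
  (∫⁻ x : Fin n → ℝ, ∏ j, f j (B j *ᵥ x) ^ c j) / ∏ j, (∫⁻ y, f j y) ^ c j

/-- The Brascamp–Lieb constant `BL(B,c)`. -/
def BLconst {m n : ℕ} {nd : Fin m → ℕ} (B : MTrans m n nd) (c : Fin m → ℝ) : ℝ≥0∞ :=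
  ⨆ (f : ∀ j : Fin m, (Fin (nd j) → ℝ) → ℝ≥0∞) (_ : IsInput f), BLratio B c f

/-- Membership in `F(c)`: finite BL constant and projection-normalised. -/
def MemF {m n : ℕ} {nd : Fin m → ℕ} (B : MTrans m n nd) (c : Fin m → ℝ) : Prop :=
  BLconst B c < ⊤ ∧ ∀ j, B j * (B j)ᵀ = 1

/-- Membership in `G(c)`: the datum `(B,c)` is geometric. -/
def Geometric {m n : ℕ} {nd : Fin m → ℕ} (B : MTrans m n nd) (c : Fin m → ℝ) : Prop :=
  (∀ j, B j * (B j)ᵀ = 1) ∧ ∑ j, c j • ((B j)ᵀ * B j) = 1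

/-- Equivalence of `m`-transformations: `B̃_j = T_j⁻¹ B_j T` for invertible `T, T_j`. -/
def EquivTrans {m n : ℕ} {nd : Fin m → ℕ} (B Bt : MTrans m n nd) : Prop :=
  ∃ (T : Matrix (Fin n) (Fin n) ℝ) (Tj : ∀ j, Matrix (Fin (nd j)) (Fin (nd j)) ℝ),
    IsUnit T ∧ (∀ j, IsUnit (Tj j)) ∧ ∀ j, Bt j = (Tj j)⁻¹ * B j * T

open scoped ComplexOrder in
/-- The positive semidefinite square root of a positive semidefinite matrix (the definition
`Matrix.PosSemidef.sqrt` of the older Mathlib, since removed). -/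
def Matrix.PosSemidef.sqrt {n : Type*} [Fintype n] [DecidableEq n] {𝕜 : Type*} [RCLike 𝕜]
    {A : Matrix n n 𝕜} (hA : A.PosSemidef) : Matrix n n 𝕜 :=
  hA.1.eigenvectorUnitary.1 * diagonal ((↑) ∘ Real.sqrt ∘ hA.1.eigenvalues) *
    (star hA.1.eigenvectorUnitary : Matrix n n 𝕜)

open Classical in
/-- The map `φ`: `φ(B)_j = (B_j B_j^*)^{-1/2} B_j` (defined where `B_j B_j^*` is
positive definite, and as `B_j` otherwise). -/
def phiMap {m n : ℕ} {nd : Fin m → ℕ} (B : MTrans m n nd) : MTrans m n nd := fun j =>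
  if h : (B j * (B j)ᵀ).PosDef then (h.posSemidef.sqrt)⁻¹ * B j else B j

open Classical in
/-- The map `ψ`: `ψ(B)_j = B_j M^{-1/2}` with `M = ∑ c_j B_j^* B_j` (defined where `M`
is positive definite, and as `B_j` otherwise). -/
def psiMap {m n : ℕ} {nd : Fin m → ℕ} (c : Fin m → ℝ) (B : MTrans m n nd) : MTrans m n nd :=
  fun j =>
    if h : (∑ i, c i • ((B i)ᵀ * B i)).PosDef then B j * (h.posSemidef.sqrt)⁻¹ else B j

/-- The BL scaling map `Φ = φ ∘ ψ`. -/
def PhiMap {m n : ℕ} {nd : Fin m → ℕ} (c : Fin m → ℝ) (B : MTrans m n nd) : MTrans m n nd :=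
  phiMap (psiMap c B)

/-- The operator norm of a matrix, viewed as a linear map between Euclidean spaces. -/
def opNorm {a b : ℕ} (A : Matrix (Fin a) (Fin b) ℝ) : ℝ :=
  ‖LinearMap.toContinuousLinearMap (Matrix.toEuclideanLin A)‖


/- ===== auxiliary lemmas ===== -/

section BLAux

open Pointwise

lemma Matrix.PosSemidef.sqrt_mul_self {ι : Type*} [Fintype ι] [DecidableEq ι]
    {A : Matrix ι ι ℝ} (hA : A.PosSemidef) : hA.sqrt * hA.sqrt = A := by
  have hU : star (hA.1.eigenvectorUnitary : Matrix ι ι ℝ) * (hA.1.eigenvectorUnitary : Matrix ι ι ℝ) = 1 := Unitary.coe_star_mul_self _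
  have hD : diagonal (RCLike.ofReal ∘ Real.sqrt ∘ hA.1.eigenvalues : ι → ℝ) *
      diagonal (RCLike.ofReal ∘ Real.sqrt ∘ hA.1.eigenvalues : ι → ℝ) =
      diagonal (RCLike.ofReal ∘ hA.1.eigenvalues : ι → ℝ) := by
    rw [diagonal_mul_diagonal]
    congr 1
    funext i
    simp [RCLike.ofReal_real_eq_id, Real.mul_self_sqrt (hA.eigenvalues_nonneg i)]
  conv_rhs => rw [hA.1.spectral_theorem, Unitary.conjStarAlgAut_apply]
  rw [Matrix.PosSemidef.sqrt, ← hD]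
  simp only [Matrix.mul_assoc]
  rw [← Matrix.mul_assoc (star (hA.1.eigenvectorUnitary : Matrix ι ι ℝ)), hU, Matrix.one_mul]

lemma Matrix.PosSemidef.posSemidef_sqrt {ι : Type*} [Fintype ι] [DecidableEq ι]
    {A : Matrix ι ι ℝ} (hA : A.PosSemidef) : hA.sqrt.PosSemidef := by
  rw [Matrix.PosSemidef.sqrt, Matrix.star_eq_conjTranspose]
  refine (Matrix.posSemidef_diagonal_iff.mpr fun i => ?_).mul_mul_conjTranspose_same _
  simp [RCLike.ofReal_real_eq_id, Real.sqrt_nonneg]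

lemma Matrix.PosSemidef.sqrt_eq_one_of_eq_one {ι : Type*} [Fintype ι] [DecidableEq ι]
    {A : Matrix ι ι ℝ} (hA : A.PosSemidef) (h1 : A = 1) : hA.sqrt = 1 := by
  have hU1 : star (hA.1.eigenvectorUnitary : Matrix ι ι ℝ) * (hA.1.eigenvectorUnitary : Matrix ι ι ℝ) = 1 := Unitary.coe_star_mul_self _
  have hspec := hA.1.spectral_theorem
  rw [Unitary.conjStarAlgAut_apply] at hspec
  have hd : diagonal (RCLike.ofReal ∘ hA.1.eigenvalues : ι → ℝ) = 1 := by
    calc diagonal (RCLike.ofReal ∘ hA.1.eigenvalues : ι → ℝ)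
        = star (hA.1.eigenvectorUnitary : Matrix ι ι ℝ) * ((hA.1.eigenvectorUnitary : Matrix ι ι ℝ) * diagonal (RCLike.ofReal ∘ hA.1.eigenvalues : ι → ℝ) * star (hA.1.eigenvectorUnitary : Matrix ι ι ℝ))
          * (hA.1.eigenvectorUnitary : Matrix ι ι ℝ) := by
          simp only [Matrix.mul_assoc, hU1, Matrix.mul_one]
          rw [← Matrix.mul_assoc, hU1, Matrix.one_mul]
      _ = star (hA.1.eigenvectorUnitary : Matrix ι ι ℝ) * A * (hA.1.eigenvectorUnitary : Matrix ι ι ℝ) := by rw [← hspec]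
      _ = 1 := (congrArg (fun X => star (hA.1.eigenvectorUnitary : Matrix ι ι ℝ) * X * (hA.1.eigenvectorUnitary : Matrix ι ι ℝ)) h1).trans (by rw [Matrix.mul_one, hU1])
  have hev : ∀ i, hA.1.eigenvalues i = 1 := by
    intro i
    have := congrFun (congrFun hd i) i
    simpa [RCLike.ofReal_real_eq_id] using this
  have hsd : diagonal (RCLike.ofReal ∘ Real.sqrt ∘ hA.1.eigenvalues : ι → ℝ) =
      diagonal (RCLike.ofReal ∘ hA.1.eigenvalues : ι → ℝ) := by
    congr 1; funext i; simp [hev i]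
  rw [Matrix.PosSemidef.sqrt, hsd, ← hspec]
  exact h1

lemma BL_trace_eq_sum_eig {k : ℕ} {A : Matrix (Fin k) (Fin k) ℝ} (hA : A.IsHermitian) :
    A.trace = ∑ i, hA.eigenvalues i := by
  conv_lhs => rw [hA.spectral_theorem, Unitary.conjStarAlgAut_apply]
  rw [Matrix.trace_mul_cycle]
  rw [show star (hA.eigenvectorUnitary : Matrix (Fin k) (Fin k) ℝ) *
      (hA.eigenvectorUnitary : Matrix (Fin k) (Fin k) ℝ) = 1 from
    Unitary.coe_star_mul_self _, one_mul, Matrix.trace_diagonal]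
  simp [RCLike.ofReal]

lemma BL_det_le_exp_trace {k : ℕ} {A : Matrix (Fin k) (Fin k) ℝ} (hA : A.PosDef) :
    A.det ≤ Real.exp (A.trace - k) := by
  have h1 := hA.isHermitian.det_eq_prod_eigenvalues
  have h2 := BL_trace_eq_sum_eig hA.isHermitian
  rw [h1, h2]
  calc ∏ i, (hA.isHermitian.eigenvalues i : ℝ)
      ≤ ∏ i, Real.exp (hA.isHermitian.eigenvalues i - 1) := by
        apply Finset.prod_le_prod
        · exact fun i _ => (hA.eigenvalues_pos i).le
        · intro i _
          have := Real.add_one_le_exp (hA.isHermitian.eigenvalues i - 1)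
          linarith
    _ = Real.exp (∑ i, (hA.isHermitian.eigenvalues i - 1)) := by rw [Real.exp_sum]
    _ = Real.exp ((∑ i, hA.isHermitian.eigenvalues i) - k) := by
        rw [Finset.sum_sub_distrib]; simp

lemma BL_psd_det_nonneg {k : ℕ} {A : Matrix (Fin k) (Fin k) ℝ} (hA : A.PosSemidef) :
    0 ≤ A.det := by
  rw [hA.isHermitian.det_eq_prod_eigenvalues]
  exact Finset.prod_nonneg fun i _ => hA.eigenvalues_nonneg i

lemma BL_sqrt_det_pos {k : ℕ} {A : Matrix (Fin k) (Fin k) ℝ} (hA : A.PosDef) :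
    0 < (hA.posSemidef.sqrt).det := by
  have h2 : hA.posSemidef.sqrt * hA.posSemidef.sqrt = A := hA.posSemidef.sqrt_mul_self
  have hnn : 0 ≤ (hA.posSemidef.sqrt).det := BL_psd_det_nonneg hA.posSemidef.posSemidef_sqrt
  have hsq : (hA.posSemidef.sqrt).det * (hA.posSemidef.sqrt).det = A.det := by
    rw [← Matrix.det_mul, h2]
  have := hA.det_pos
  nlinarith

lemma BL_lintegral_comp_mulVec {k : ℕ} {A : Matrix (Fin k) (Fin k) ℝ} (hA : A.det ≠ 0)
    {h : (Fin k → ℝ) → ℝ≥0∞} (hh : Measurable h) :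
    ∫⁻ x, h (A *ᵥ x) = ENNReal.ofReal |A.det⁻¹| * ∫⁻ y, h y := by
  have hmap := Real.map_matrix_volume_pi_eq_smul_volume_pi (ι := Fin k) hA
  have hm : Measurable (fun x => A *ᵥ x) := by
    have : Continuous (fun x : Fin k → ℝ => A *ᵥ x) :=
      LinearMap.continuous_on_pi (Matrix.mulVecLin A)
    exact this.measurable
  have : ∫⁻ x, h (A *ᵥ x) = ∫⁻ y, h y ∂(Measure.map (Matrix.toLin' A) volume) := by
    rw [lintegral_map hh]
    · rfl
    · exact hm
  rw [this, hmap, lintegral_smul_measure, smul_eq_mul]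

lemma BL_continuous_mulVec {a b : ℕ} (A : Matrix (Fin a) (Fin b) ℝ) :
    Continuous (fun x : Fin b → ℝ => A *ᵥ x) :=
  LinearMap.continuous_on_pi (Matrix.mulVecLin A)

lemma BL_measurable_mulVec {a b : ℕ} (A : Matrix (Fin a) (Fin b) ℝ) :
    Measurable (fun x : Fin b → ℝ => A *ᵥ x) := (BL_continuous_mulVec A).measurable

lemma BL_rpow_sum_eq_prod {x : ℝ≥0∞} (hx : x ≠ 0) (hx' : x ≠ ⊤) {ι : Type*} (s : Finset ι)
    (a : ι → ℝ) : x ^ (∑ i ∈ s, a i) = ∏ i ∈ s, x ^ a i := by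
  classical
  induction s using Finset.induction with
  | empty => simp
  | insert _ _ hnot ih =>
    rw [Finset.sum_insert hnot, Finset.prod_insert hnot, ENNReal.rpow_add _ _ hx hx', ih]

lemma BL_exponent_zero {e : ℝ} {r κ : ℝ≥0∞} (hr : 0 < r) (hκ : κ < ⊤)
    (h : ∀ l : ℝ, 0 < l → (ENNReal.ofReal l) ^ e * r ≤ κ) : e = 0 := by
  by_contra he
  have hrκ : r ≤ κ := by simpa using h 1 one_pos
  have hrne : r ≠ ⊤ := (lt_of_le_of_lt hrκ hκ).ne
  have hq : κ / r ≠ ⊤ := (ENNReal.div_lt_top hκ.ne hr.ne').ne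
  set T : ℝ := (κ / r).toReal + 1 with hT
  have hT1 : 0 < T := by positivity
  set l : ℝ := T ^ (1/e) with hl
  have hlpos : 0 < l := Real.rpow_pos_of_pos hT1 _
  have hle : l ^ e = T := by
    rw [hl, ← Real.rpow_mul hT1.le, one_div, inv_mul_cancel₀ he, Real.rpow_one]
  have h2 := h l hlpos
  rw [ENNReal.ofReal_rpow_of_pos hlpos, hle] at h2
  have h3 : ENNReal.ofReal T ≤ κ / r :=
    (ENNReal.le_div_iff_mul_le (Or.inl hr.ne') (Or.inl hrne)).mpr h2
  have h4 : κ / r < ENNReal.ofReal T := by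
    rw [ENNReal.lt_ofReal_iff_toReal_lt hq]
    simp [hT]
  exact absurd h3 h4.not_ge

lemma BL_finrank_pi_fin (k : ℕ) : Module.finrank ℝ (Fin k → ℝ) = k := by simp

lemma BL_ediv_helper {l : ℝ} (hl : 0 < l) (a b : ℝ) (A D : ℝ≥0∞) :
    ((ENNReal.ofReal l) ^ a * A) / ((ENNReal.ofReal l) ^ b * D)
      = (ENNReal.ofReal l) ^ (a - b) * (A / D) := by
  set x := ENNReal.ofReal l with hx
  have hx0 : x ≠ 0 := by simp [hx, hl]
  have hxt : x ≠ ⊤ := ENNReal.ofReal_ne_top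
  have hb0 : x ^ b ≠ 0 := by
    simp only [ne_eq, ENNReal.rpow_eq_zero_iff, not_or]
    exact ⟨fun h => absurd h.1 hx0, fun h => absurd h.1 hxt⟩
  have hbt : x ^ b ≠ ⊤ := by
    simp only [ne_eq, ENNReal.rpow_eq_top_iff, not_or]
    exact ⟨fun h => absurd h.1 hx0, fun h => absurd h.1 hxt⟩
  have : x ^ a = x ^ (a - b) * x ^ b := by
    rw [← ENNReal.rpow_add _ _ hx0 hxt]; ring_nf
  rw [this, mul_assoc, mul_div_assoc, ENNReal.mul_div_mul_left _ _ hb0 hbt]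

variable {m n : ℕ} {nd : Fin m → ℕ} {c : Fin m → ℝ} {B : MTrans m n nd}

lemma BL_transpose_mulVec_ne_zero (j : Fin m) (hBBt : B j * (B j)ᵀ = 1)
    {x : Fin (nd j) → ℝ} (hx : x ≠ 0) : (B j)ᵀ *ᵥ x ≠ 0 := by
  intro h
  apply hx
  calc x = (B j * (B j)ᵀ) *ᵥ x := by rw [hBBt, Matrix.one_mulVec]
    _ = B j *ᵥ ((B j)ᵀ *ᵥ x) := by rw [← Matrix.mulVec_mulVec]
    _ = 0 := by rw [h, Matrix.mulVec_zero]

lemma BL_posDef_B_inv_Bt (j : Fin m) (hBBt : B j * (B j)ᵀ = 1)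
    {M : Matrix (Fin n) (Fin n) ℝ} (hM : M.PosDef) :
    (B j * M⁻¹ * (B j)ᵀ).PosDef := by
  have hNi : M⁻¹.PosDef := hM.inv
  refine Matrix.PosDef.of_dotProduct_mulVec_pos ?_ ?_
  · have := (hNi.posSemidef.mul_mul_conjTranspose_same (B j)).isHermitian
    simpa using this
  · intro x hx
    have hy : (B j)ᵀ *ᵥ x ≠ 0 := BL_transpose_mulVec_ne_zero j hBBt hx
    have := hNi.dotProduct_mulVec_pos hy
    simpa [star_trivial, ← Matrix.mulVec_mulVec, Matrix.dotProduct_mulVec,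
      ← Matrix.mulVec_transpose] using this

lemma BL_trace_M_eq (hBBt : ∀ j, B j * (B j)ᵀ = 1) :
    (∑ i, c i • ((B i)ᵀ * B i)).trace = ∑ j, c j * nd j := by
  rw [Matrix.trace_sum]
  refine Finset.sum_congr rfl fun j _ => ?_
  rw [Matrix.trace_smul, Matrix.trace_mul_comm, hBBt j, Matrix.trace_one]
  simp [mul_comm]

lemma BL_trace_G_sum_eq (hM : (∑ i, c i • ((B i)ᵀ * B i)).PosDef) :
    ∑ j, c j * (B j * (∑ i, c i • ((B i)ᵀ * B i))⁻¹ * (B j)ᵀ).trace = n := by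
  set M := ∑ i, c i • ((B i)ᵀ * B i) with hMdef
  have h1 : ∀ j, (B j * M⁻¹ * (B j)ᵀ).trace = ((B j)ᵀ * B j * M⁻¹).trace := by
    intro j
    rw [Matrix.trace_mul_cycle]
  calc ∑ j, c j * (B j * M⁻¹ * (B j)ᵀ).trace
      = ∑ j, (c j • ((B j)ᵀ * B j * M⁻¹)).trace := by
        refine Finset.sum_congr rfl fun j _ => ?_
        rw [h1 j, Matrix.trace_smul]; simp
    _ = ((∑ j, c j • ((B j)ᵀ * B j)) * M⁻¹).trace := by
        rw [← Matrix.trace_sum, Finset.sum_mul]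
        congr 1
        refine Finset.sum_congr rfl fun j _ => ?_
        rw [Matrix.smul_mul, Matrix.mul_assoc]
    _ = (M * M⁻¹).trace := by rw [← hMdef]
    _ = (1 : Matrix (Fin n) (Fin n) ℝ).trace := by
        rw [Matrix.mul_nonsing_inv _ (Ne.isUnit hM.det_pos.ne')]
    _ = n := by simp [Matrix.trace_one]

lemma BL_det_core (hc : ∀ j, 0 < c j) (hBBt : ∀ j, B j * (B j)ᵀ = 1)
    (hM : (∑ i, c i • ((B i)ᵀ * B i)).PosDef)
    (hscale : (n : ℝ) = ∑ j, c j * nd j) :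
    (∑ i, c i • ((B i)ᵀ * B i)).det *
      ∏ j, (B j * (∑ i, c i • ((B i)ᵀ * B i))⁻¹ * (B j)ᵀ).det ^ (c j) ≤ 1 := by
  set M := ∑ i, c i • ((B i)ᵀ * B i) with hMdef
  have hGpd : ∀ j, (B j * M⁻¹ * (B j)ᵀ).PosDef := fun j => BL_posDef_B_inv_Bt j (hBBt j) hM
  have hdet1 : M.det ≤ Real.exp (M.trace - n) := BL_det_le_exp_trace hM
  have hdet2 : ∀ j, (B j * M⁻¹ * (B j)ᵀ).det ^ (c j)
      ≤ Real.exp (c j * ((B j * M⁻¹ * (B j)ᵀ).trace - nd j)) := by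
    intro j
    calc (B j * M⁻¹ * (B j)ᵀ).det ^ (c j)
        ≤ (Real.exp ((B j * M⁻¹ * (B j)ᵀ).trace - nd j)) ^ (c j) :=
          Real.rpow_le_rpow (hGpd j).det_pos.le (BL_det_le_exp_trace (hGpd j)) (hc j).le
      _ = Real.exp (c j * ((B j * M⁻¹ * (B j)ᵀ).trace - nd j)) := by
          rw [← Real.exp_mul, mul_comm]
  calc M.det * ∏ j, (B j * M⁻¹ * (B j)ᵀ).det ^ (c j)
      ≤ Real.exp (M.trace - n) * ∏ j, Real.exp (c j * ((B j * M⁻¹ * (B j)ᵀ).trace - nd j)) := by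
        apply mul_le_mul hdet1 _ _ (Real.exp_pos _).le
        · exact Finset.prod_le_prod (fun j _ => Real.rpow_nonneg (hGpd j).det_pos.le _)
            (fun j _ => hdet2 j)
        · exact Finset.prod_nonneg fun j _ => Real.rpow_nonneg (hGpd j).det_pos.le _
    _ = Real.exp ((M.trace - n) + ∑ j, c j * ((B j * M⁻¹ * (B j)ᵀ).trace - nd j)) := by
        rw [← Real.exp_sum, ← Real.exp_add]
    _ = 1 := by
        rw [show (M.trace - n) + ∑ j, c j * ((B j * M⁻¹ * (B j)ᵀ).trace - nd j) = (0:ℝ) from ?_]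
        · exact Real.exp_zero
        have e1 : M.trace = ∑ j, c j * nd j := BL_trace_M_eq hBBt
        have e2 : ∑ j, c j * (B j * M⁻¹ * (B j)ᵀ).trace = n := BL_trace_G_sum_eq hM
        have e3 : ∑ j, c j * ((B j * M⁻¹ * (B j)ᵀ).trace - nd j)
            = (∑ j, c j * (B j * M⁻¹ * (B j)ᵀ).trace) - ∑ j, c j * nd j := by
          rw [← Finset.sum_sub_distrib]
          exact Finset.sum_congr rfl fun j _ => by ring
        rw [e1, e3, e2, ← hscale]
        ring

lemma BL_scale_cond (hc : ∀ j, 0 < c j) (hfin : BLconst B c < ⊤) :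
    (n : ℝ) = ∑ j, c j * nd j := by
  classical
  set κ := BLconst B c with hκ
  set bb : ∀ _j : Fin m, ℝ≥0∞ := fun j => volume (Metric.ball (0 : Fin (nd j) → ℝ) 1) with hbb
  have hbfin : ∀ j, bb j < ⊤ := fun _j => measure_ball_lt_top
  set K : ∀ _l : ℝ, Set (Fin n → ℝ) :=
    fun l => {x | ∀ j, B j *ᵥ x ∈ Metric.closedBall (0 : Fin (nd j) → ℝ) l} with hK
  have hKcl : ∀ l, IsClosed (K l) := by
    intro l
    have : K l = ⋂ j, (fun x => B j *ᵥ x) ⁻¹' (Metric.closedBall 0 l) := by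
      ext x; simp [hK]
    rw [this]
    exact isClosed_iInter fun j => (Metric.isClosed_closedBall).preimage (BL_continuous_mulVec (B j))
  set fl : ∀ _l : ℝ, ∀ j : Fin m, (Fin (nd j) → ℝ) → ℝ≥0∞ :=
    fun l j => (Metric.closedBall (0 : Fin (nd j) → ℝ) l).indicator 1 with hfl
  have hinput : ∀ l : ℝ, 0 < l → IsInput (fl l) := by
    intro l hl j
    refine ⟨measurable_one.indicator Metric.isClosed_closedBall.measurableSet, ?_, ?_⟩
    · rw [lintegral_indicator_one Metric.isClosed_closedBall.measurableSet]
      exact Metric.measure_closedBall_pos _ _ hl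
    · rw [lintegral_indicator_one Metric.isClosed_closedBall.measurableSet]
      exact measure_closedBall_lt_top
  have hnum : ∀ l : ℝ, 0 < l →
      (∫⁻ x : Fin n → ℝ, ∏ j, fl l j (B j *ᵥ x) ^ c j) = volume (K l) := by
    intro l hl
    have : (fun x : Fin n → ℝ => ∏ j, fl l j (B j *ᵥ x) ^ c j) = (K l).indicator 1 := by
      funext x
      by_cases hx : x ∈ K l
      · rw [Set.indicator_of_mem hx]
        refine (Finset.prod_eq_one fun j _ => ?_).trans rfl
        rw [hfl]; simp only [Set.indicator_of_mem (hx j)]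
        exact ENNReal.one_rpow _
      · rw [Set.indicator_of_notMem hx]
        simp only [hK, Set.mem_setOf_eq, not_forall] at hx
        obtain ⟨j0, hj0⟩ := hx
        refine Finset.prod_eq_zero (Finset.mem_univ j0) ?_
        rw [hfl]; simp only [Set.indicator_of_notMem hj0]
        exact ENNReal.zero_rpow_of_pos (hc j0)
    rw [this, lintegral_indicator_one (hKcl l).measurableSet]
  have hKsmul : ∀ l : ℝ, 0 < l → K l = l • K 1 := by
    intro l hl
    ext x
    rw [Set.mem_smul_set_iff_inv_smul_mem₀ hl.ne']
    simp only [hK, Set.mem_setOf_eq, Matrix.mulVec_smul, mem_closedBall_zero_iff]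
    refine forall_congr' fun j => ?_
    rw [norm_smul, norm_inv, Real.norm_eq_abs, abs_of_pos hl]
    rw [inv_mul_le_iff₀ hl, mul_one]
  have hKvol : ∀ l : ℝ, 0 < l →
      volume (K l) = (ENNReal.ofReal l) ^ (n : ℝ) * volume (K 1) := by
    intro l hl
    rw [hKsmul l hl, Measure.addHaar_smul_of_nonneg volume hl.le, BL_finrank_pi_fin,
      ENNReal.ofReal_pow hl.le, ← ENNReal.rpow_natCast]
  have hKpos : 0 < volume (K 1) := by
    set φ : ∀ j : Fin m, (Fin n → ℝ) →L[ℝ] (Fin (nd j) → ℝ) :=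
      fun j => LinearMap.toContinuousLinearMap (Matrix.mulVecLin (B j)) with hφ
    set N : ℝ := ∑ j, ‖φ j‖ with hN
    have hN0 : 0 ≤ N := Finset.sum_nonneg fun j _ => norm_nonneg _
    have hδ : 0 < (N + 1)⁻¹ := by positivity
    have hsub : Metric.closedBall (0 : Fin n → ℝ) (N + 1)⁻¹ ⊆ K 1 := by
      intro x hx
      rw [mem_closedBall_zero_iff] at hx
      intro j
      rw [mem_closedBall_zero_iff]
      have h1 : ‖B j *ᵥ x‖ = ‖φ j x‖ := by rw [hφ]; rfl
      have h2 : ‖φ j x‖ ≤ ‖φ j‖ * ‖x‖ := (φ j).le_opNorm x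
      have h3 : ‖φ j‖ ≤ N := Finset.single_le_sum (fun i _ => norm_nonneg (φ i))
        (Finset.mem_univ j)
      have h4 : ‖φ j‖ * ‖x‖ ≤ N * (N + 1)⁻¹ :=
        mul_le_mul h3 hx (norm_nonneg _) hN0
      have h5 : N * (N + 1)⁻¹ ≤ 1 := by
        rw [mul_inv_le_iff₀ (by positivity), one_mul]; linarith
      rw [h1]; linarith
    calc (0:ℝ≥0∞) < volume (Metric.closedBall (0 : Fin n → ℝ) (N + 1)⁻¹) :=
          Metric.measure_closedBall_pos _ _ hδ
      _ ≤ volume (K 1) := measure_mono hsub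
  set s : ℝ := ∑ j, c j * nd j with hs
  set Dq : ℝ≥0∞ := ∏ j, (bb j) ^ (c j) with hDq
  have hDqfin : Dq ≠ ⊤ := by
    rw [hDq]
    refine (ENNReal.prod_lt_top fun j _ => ?_).ne
    exact ENNReal.rpow_lt_top_of_nonneg (hc j).le (hbfin j).ne
  set r : ℝ≥0∞ := volume (K 1) / Dq with hr
  have hrpos : 0 < r := ENNReal.div_pos hKpos.ne' hDqfin
  have hratio : ∀ l : ℝ, 0 < l →
      BLratio B c (fl l) = (ENNReal.ofReal l) ^ ((n : ℝ) - s) * r := by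
    intro l hl
    have hx0 : (ENNReal.ofReal l) ≠ 0 := by simp [hl]
    have hxt : (ENNReal.ofReal l) ≠ ⊤ := ENNReal.ofReal_ne_top
    have hint : ∀ j, (∫⁻ y, fl l j y) = ENNReal.ofReal l ^ (nd j : ℝ) * bb j := by
      intro j
      rw [hfl]
      rw [lintegral_indicator_one Metric.isClosed_closedBall.measurableSet]
      rw [Measure.addHaar_closedBall _ _ hl.le, BL_finrank_pi_fin, ENNReal.ofReal_pow hl.le,
        ← ENNReal.rpow_natCast]
    have hden : ∏ j, (∫⁻ y, fl l j y) ^ c j = (ENNReal.ofReal l) ^ s * Dq := by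
      calc ∏ j, (∫⁻ y, fl l j y) ^ c j
          = ∏ j, ((ENNReal.ofReal l) ^ ((nd j : ℝ) * c j) * (bb j) ^ c j) := by
            refine Finset.prod_congr rfl fun j _ => ?_
            rw [hint j, ENNReal.mul_rpow_of_ne_top (by
              simp only [ne_eq, ENNReal.rpow_eq_top_iff, not_or]
              exact ⟨fun h => absurd h.1 hx0, fun h => absurd h.1 hxt⟩) (hbfin j).ne,
              ENNReal.rpow_mul]
        _ = (ENNReal.ofReal l) ^ s * Dq := by
            rw [Finset.prod_mul_distrib, ← BL_rpow_sum_eq_prod hx0 hxt, hDq]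
            congr 1
            rw [hs]
            congr 1
            exact Finset.sum_congr rfl fun j _ => by ring
    rw [BLratio, hnum l hl, hKvol l hl, hden, BL_ediv_helper hl]
  have hb : ∀ l : ℝ, 0 < l → (ENNReal.ofReal l) ^ ((n:ℝ) - s) * r ≤ κ := by
    intro l hl
    rw [← hratio l hl, hκ, BLconst]
    exact le_iSup_of_le (fl l) (le_iSup_of_le (hinput l hl) le_rfl)
  have h0 := BL_exponent_zero hrpos hfin hb
  linarith [h0]

lemma BL_PhiMap_eq_self_of_not_posDef (hBBt : ∀ j, B j * (B j)ᵀ = 1)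
    (hM : ¬ (∑ i, c i • ((B i)ᵀ * B i)).PosDef) : PhiMap c B = B := by
  have hψ : psiMap c B = B := funext fun j => dif_neg hM
  funext j
  rw [PhiMap, hψ, phiMap]
  have hpd : (B j * (B j)ᵀ).PosDef := by rw [hBBt j]; exact Matrix.PosDef.one
  rw [dif_pos hpd]
  have h1 : (1 : Matrix (Fin (nd j)) (Fin (nd j)) ℝ) = hpd.posSemidef.sqrt :=
    (Matrix.PosSemidef.sqrt_eq_one_of_eq_one hpd.posSemidef (hBBt j)).symm
  rw [← h1, show (1 : Matrix (Fin (nd j)) (Fin (nd j)) ℝ)⁻¹ = 1 from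
    Matrix.inv_eq_left_inv (one_mul 1), Matrix.one_mul]

lemma BL_PhiMap_apply_of_posDef (hBBt : ∀ j, B j * (B j)ᵀ = 1)
    (hM : (∑ i, c i • ((B i)ᵀ * B i)).PosDef) (j : Fin m) :
    ∃ Cj : Matrix (Fin (nd j)) (Fin (nd j)) ℝ, 0 < Cj.det ∧
      Cj * Cj = B j * (∑ i, c i • ((B i)ᵀ * B i))⁻¹ * (B j)ᵀ ∧
      PhiMap c B j = Cj⁻¹ * (B j * (hM.posSemidef.sqrt)⁻¹) := by
  set M := ∑ i, c i • ((B i)ᵀ * B i) with hMdef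
  set R := hM.posSemidef.sqrt with hRdef
  have hR2 : R * R = M := hM.posSemidef.sqrt_mul_self
  have hRherm : Rᵀ = R := by
    have := hM.posSemidef.posSemidef_sqrt.isHermitian
    rw [← Matrix.conjTranspose_eq_transpose_of_trivial]
    exact this
  have hRR : R⁻¹ * R⁻¹ = M⁻¹ := by rw [← hR2, Matrix.mul_inv_rev]
  have hψ : psiMap c B j = B j * R⁻¹ := by rw [psiMap, dif_pos hM]
  have hGval : (psiMap c B j) * (psiMap c B j)ᵀ = B j * M⁻¹ * (B j)ᵀ := by
    rw [hψ, Matrix.transpose_mul, Matrix.transpose_nonsing_inv, hRherm,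
      Matrix.mul_assoc, ← Matrix.mul_assoc (R⁻¹), hRR, ← Matrix.mul_assoc]
  have hGpd : ((psiMap c B j) * (psiMap c B j)ᵀ).PosDef := by
    rw [hGval]; exact BL_posDef_B_inv_Bt j (hBBt j) hM
  refine ⟨hGpd.posSemidef.sqrt, ?_, ?_, ?_⟩
  · have h2 : hGpd.posSemidef.sqrt * hGpd.posSemidef.sqrt = _ := hGpd.posSemidef.sqrt_mul_self
    have hnn : 0 ≤ (hGpd.posSemidef.sqrt).det := BL_psd_det_nonneg hGpd.posSemidef.posSemidef_sqrt
    have hsq : (hGpd.posSemidef.sqrt).det * (hGpd.posSemidef.sqrt).det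
        = ((psiMap c B j) * (psiMap c B j)ᵀ).det := by
      rw [← Matrix.det_mul, h2]
    have hpos : 0 < ((psiMap c B j) * (psiMap c B j)ᵀ).det := hGpd.det_pos
    nlinarith
  · rw [hGpd.posSemidef.sqrt_mul_self, hGval]
  · rw [PhiMap, phiMap, dif_pos hGpd]
    exact congrArg _ hψ

end BLAux


theorem BLconst_PhiMap_le {m n : ℕ} {nd : Fin m → ℕ} (c : Fin m → ℝ)
    (hc : ∀ j, 0 < c j) (B : MTrans m n nd) (hB : MemF B c) :
    BLconst (PhiMap c B) c ≤ BLconst B c := by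
  obtain ⟨hfin, hBBt⟩ := hB
  by_cases hM : (∑ i, c i • ((B i)ᵀ * B i)).PosDef
  case neg => rw [BL_PhiMap_eq_self_of_not_posDef hBBt hM]
  have hscale : (n : ℝ) = ∑ j, c j * nd j := BL_scale_cond hc hfin
  choose C hCdet hCsq hPhiEq using BL_PhiMap_apply_of_posDef hBBt hM
  set R := hM.posSemidef.sqrt with hRdef
  have hRdet : 0 < R.det := BL_sqrt_det_pos hM
  have hR2 : R * R = (∑ i, c i • ((B i)ᵀ * B i)) := hM.posSemidef.sqrt_mul_self
  have hMdet : R.det * R.det = (∑ i, c i • ((B i)ᵀ * B i)).det := by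
    rw [← Matrix.det_mul, hR2]
  -- core real inequality
  have hcore : R.det * ∏ j, (C j).det ^ (c j) ≤ 1 := by
    have h1 := BL_det_core hc hBBt hM hscale
    have htpos : 0 < R.det * ∏ j, (C j).det ^ (c j) :=
      mul_pos hRdet (Finset.prod_pos fun j _ => Real.rpow_pos_of_pos (hCdet j) _)
    have ht2 : (R.det * ∏ j, (C j).det ^ (c j)) * (R.det * ∏ j, (C j).det ^ (c j))
        = (∑ i, c i • ((B i)ᵀ * B i)).det *
            ∏ j, (B j * (∑ i, c i • ((B i)ᵀ * B i))⁻¹ * (B j)ᵀ).det ^ (c j) := by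
      have hG : ∀ j, (B j * (∑ i, c i • ((B i)ᵀ * B i))⁻¹ * (B j)ᵀ).det ^ (c j)
          = (C j).det ^ (c j) * (C j).det ^ (c j) := by
        intro j
        rw [← hCsq j, Matrix.det_mul,
          Real.mul_rpow (hCdet j).le (hCdet j).le]
      rw [Finset.prod_congr rfl fun j _ => hG j, Finset.prod_mul_distrib, ← hMdet]
      ring
    nlinarith
  refine iSup_le fun f => iSup_le fun hf => ?_
  -- change of variables
  set g : ∀ j : Fin m, (Fin (nd j) → ℝ) → ℝ≥0∞ := fun j y => f j ((C j)⁻¹ *ᵥ y) with hg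
  have hgm : ∀ j, Measurable (g j) := fun j => (hf j).1.comp (BL_measurable_mulVec _)
  have hdCinv : ∀ j, ((C j)⁻¹).det = (C j).det⁻¹ := fun j => by
    rw [Matrix.det_nonsing_inv, Ring.inverse_eq_inv]
  have hgint : ∀ j, (∫⁻ y, g j y) = ENNReal.ofReal ((C j).det) * ∫⁻ y, f j y := by
    intro j
    have hd : ((C j)⁻¹).det ≠ 0 := by
      rw [hdCinv j]; exact inv_ne_zero (hCdet j).ne'
    have h2 := BL_lintegral_comp_mulVec hd (hf j).1
    simp only [hg]
    rw [h2, hdCinv j, inv_inv, abs_of_pos (hCdet j)]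
  have hginput : IsInput g := by
    intro j
    refine ⟨hgm j, ?_, ?_⟩
    · rw [hgint j]
      exact ENNReal.mul_pos (by simp [hCdet j]) (hf j).2.1.ne'
    · rw [hgint j]
      exact ENNReal.mul_lt_top ENNReal.ofReal_lt_top (hf j).2.2
  have hptwise : (fun x : Fin n → ℝ => ∏ j, f j (PhiMap c B j *ᵥ x) ^ c j)
      = fun x => ∏ j, g j (B j *ᵥ (R⁻¹ *ᵥ x)) ^ c j := by
    funext x
    refine Finset.prod_congr rfl fun j _ => ?_
    rw [hPhiEq j, ← Matrix.mulVec_mulVec, ← Matrix.mulVec_mulVec]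
  have hFm : Measurable (fun u : Fin n → ℝ => ∏ j, g j (B j *ᵥ u) ^ c j) := by
    apply Finset.measurable_prod
    intro j _
    exact (ENNReal.continuous_rpow_const.measurable).comp
      ((hgm j).comp (BL_measurable_mulVec (B j)))
  have hRinvdet : (R⁻¹).det ≠ 0 := by
    rw [Matrix.det_nonsing_inv, Ring.inverse_eq_inv]
    exact inv_ne_zero hRdet.ne'
  have hnum : (∫⁻ x, ∏ j, f j (PhiMap c B j *ᵥ x) ^ c j)
      = ENNReal.ofReal R.det * ∫⁻ u, ∏ j, g j (B j *ᵥ u) ^ c j := by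
    rw [hptwise]
    have h2 := BL_lintegral_comp_mulVec hRinvdet hFm
    rw [show (fun x : Fin n → ℝ => ∏ j, g j (B j *ᵥ (R⁻¹ *ᵥ x)) ^ c j)
        = fun x => (fun u => ∏ j, g j (B j *ᵥ u) ^ c j) (R⁻¹ *ᵥ x) from rfl]
    rw [h2, Matrix.det_nonsing_inv, Ring.inverse_eq_inv, inv_inv, abs_of_pos hRdet]
  -- constants
  have hk0 : (∏ j, (ENNReal.ofReal ((C j).det)) ^ c j) ≠ 0 := by
    refine Finset.prod_ne_zero_iff.mpr fun j _ => ?_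
    simp only [ne_eq, ENNReal.rpow_eq_zero_iff, not_or]
    constructor
    · rintro ⟨h1, -⟩
      exact absurd h1 (by simp [hCdet j])
    · rintro ⟨h1, -⟩
      exact absurd h1 ENNReal.ofReal_ne_top
  have hkt : (∏ j, (ENNReal.ofReal ((C j).det)) ^ c j) ≠ ⊤ := by
    refine (ENNReal.prod_lt_top fun j _ => ?_).ne
    exact ENNReal.rpow_lt_top_of_nonneg (hc j).le ENNReal.ofReal_ne_top
  have hD : ∏ j, (∫⁻ y, g j y) ^ c j
      = (∏ j, (ENNReal.ofReal ((C j).det)) ^ c j) * ∏ j, (∫⁻ y, f j y) ^ c j := by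
    rw [← Finset.prod_mul_distrib]
    refine Finset.prod_congr rfl fun j _ => ?_
    rw [hgint j, ENNReal.mul_rpow_of_ne_top ENNReal.ofReal_ne_top (hf j).2.2.ne]
  have hswap : ∀ (a N kk Pp : ℝ≥0∞), kk ≠ 0 → kk ≠ ⊤ →
      (a * N) / Pp = (a * kk) * (N / (kk * Pp)) := by
    intro a N kk Pp h0 ht
    rw [div_eq_mul_inv, div_eq_mul_inv, ENNReal.mul_inv (Or.inl h0) (Or.inl ht)]
    calc a * N * Pp⁻¹
        = (kk * kk⁻¹) * (a * (N * Pp⁻¹)) := by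
          rw [ENNReal.mul_inv_cancel h0 ht, one_mul]; ring
      _ = a * kk * (N * (kk⁻¹ * Pp⁻¹)) := by ring
  have key : BLratio (PhiMap c B) c f
      = (ENNReal.ofReal R.det * ∏ j, (ENNReal.ofReal ((C j).det)) ^ c j) * BLratio B c g := by
    rw [BLratio, BLratio, hnum, hD]
    exact hswap _ _ _ _ hk0 hkt
  have hE : ENNReal.ofReal R.det * ∏ j, (ENNReal.ofReal ((C j).det)) ^ c j ≤ 1 := by
    have hkval : (∏ j, (ENNReal.ofReal ((C j).det)) ^ c j)
        = ENNReal.ofReal (∏ j, (C j).det ^ c j) := by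
      rw [ENNReal.ofReal_prod_of_nonneg (fun j _ => Real.rpow_nonneg (hCdet j).le _)]
      exact Finset.prod_congr rfl fun j _ => ENNReal.ofReal_rpow_of_pos (hCdet j)
    rw [hkval, ← ENNReal.ofReal_mul hRdet.le]
    calc ENNReal.ofReal (R.det * ∏ j, (C j).det ^ c j) ≤ ENNReal.ofReal 1 :=
          ENNReal.ofReal_le_ofReal hcore
      _ = 1 := by simp
  calc BLratio (PhiMap c B) c f
      = (ENNReal.ofReal R.det * ∏ j, (ENNReal.ofReal ((C j).det)) ^ c j) * BLratio B c g := key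
    _ ≤ 1 * BLratio B c g := mul_le_mul_left hE _
    _ = BLratio B c g := one_mul _
    _ ≤ BLconst B c := le_iSup_of_le g (le_iSup_of_le hginput le_rfl)

end
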